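/- For 0 < a < b, ∫_0^1 t·|1−2t|/(tb+(1−t)a)² dt = −1/(b(b−a)) + ((3a+b)/(b−a)³) ln((a+b)²/(4ab)). -/

import Mathlib

open Real Set intervalIntegral

def HarmonicallyConvexOn (I : Set ℝ) (f : ℝ → ℝ) : Prop :=
  ∀ x ∈ I, ∀ y ∈ I, ∀ t ∈ Set.Icc (0:ℝ) 1,
    f (x * y / (t * x + (1 - t) * y)) ≤ t * f y + (1 - t) * f x

theorem stmt10 (a b : ℝ) (ha : 0 < a) (hab : a < b) :
    ∫ t in (0:ℝ)..1, t * |1 - 2 * t| / (t * b + (1 - t) * a) ^ 2 =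
      -1 / (b * (b - a)) + (3 * a + b) / (b - a) ^ 3 * Real.log ((a + b) ^ 2 / (4 * a * b)) := by
  have hb : 0 < b := ha.trans hab
  have hc : 0 < b - a := by linarith
  set F : ℝ → ℝ := fun t =>
      ((-2) * (t * b + (1 - t) * a) + (3 * a + b) * Real.log (t * b + (1 - t) * a)
        + a * (a + b) * (t * b + (1 - t) * a)⁻¹) / (b - a) ^ 3 with hF
  have hu : ∀ t ∈ Icc (0:ℝ) 1, 0 < t * b + (1 - t) * a := by
    intro t ht
    nlinarith [ht.1, ht.2]
  have hder : ∀ t ∈ Icc (0:ℝ) 1,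
      HasDerivAt F (t * (1 - 2 * t) / (t * b + (1 - t) * a) ^ 2) t := by
    intro t ht
    have hu0 : 0 < t * b + (1 - t) * a := hu t ht
    have h1 : HasDerivAt (fun s : ℝ => s * b + (1 - s) * a) (b - a) t := by
      have := ((hasDerivAt_id t).mul_const b).add
        (((hasDerivAt_const t (1:ℝ)).sub (hasDerivAt_id t)).mul_const a)
      refine this.congr_deriv ?_
      ring
    have h2 := h1.const_mul (-2 : ℝ)
    have h3 := (h1.log hu0.ne').const_mul (3 * a + b)
    have h4 := (h1.inv hu0.ne').const_mul (a * (a + b))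
    have hsum := ((h2.add h3).add h4).div_const ((b - a) ^ 3)
    have := hu0.ne'
    have := hc.ne'
    have key : t * (1 - 2 * t) / (t * b + (1 - t) * a) ^ 2 =
        ((-2 * (b - a) + (3 * a + b) * ((b - a) / (t * b + (1 - t) * a)) +
        a * (a + b) * (-(b - a) / (t * b + (1 - t) * a) ^ 2)) / (b - a) ^ 3 : ℝ) := by
      field_simp
      ring
    exact hsum.congr_deriv key.symm
  have hcont : ContinuousOn (fun t => t * |1 - 2 * t| / (t * b + (1 - t) * a) ^ 2) (Icc 0 1) := by
    apply ContinuousOn.div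
    · fun_prop
    · fun_prop
    · intro t ht
      exact pow_ne_zero 2 (hu t ht).ne'
  have hcont' : ContinuousOn (fun t => t * (1 - 2 * t) / (t * b + (1 - t) * a) ^ 2) (Icc 0 1) := by
    apply ContinuousOn.div
    · fun_prop
    · fun_prop
    · intro t ht
      exact pow_ne_zero 2 (hu t ht).ne'
  have hsub1 : uIcc (0:ℝ) (1/2) ⊆ Icc 0 1 := by
    rw [uIcc_of_le (by norm_num)]
    exact Icc_subset_Icc (le_refl 0) (by norm_num)
  have hsub2 : uIcc ((1:ℝ)/2) 1 ⊆ Icc 0 1 := by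
    rw [uIcc_of_le (by norm_num)]
    exact Icc_subset_Icc (by norm_num) (le_refl 1)
  have hi1 : IntervalIntegrable (fun t => t * |1 - 2 * t| / (t * b + (1 - t) * a) ^ 2)
      MeasureTheory.volume 0 (1/2) := (hcont.mono hsub1).intervalIntegrable
  have hi2 : IntervalIntegrable (fun t => t * |1 - 2 * t| / (t * b + (1 - t) * a) ^ 2)
      MeasureTheory.volume (1/2) 1 := (hcont.mono hsub2).intervalIntegrable
  have hsplit : (∫ t in (0:ℝ)..1, t * |1 - 2 * t| / (t * b + (1 - t) * a) ^ 2)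
      = (∫ t in (0:ℝ)..(1/2), t * |1 - 2 * t| / (t * b + (1 - t) * a) ^ 2)
        + ∫ t in ((1:ℝ)/2)..1, t * |1 - 2 * t| / (t * b + (1 - t) * a) ^ 2 :=
    (integral_add_adjacent_intervals hi1 hi2).symm
  have e1 : (∫ t in (0:ℝ)..(1/2), t * |1 - 2 * t| / (t * b + (1 - t) * a) ^ 2)
      = F (1/2) - F 0 := by
    rw [intervalIntegral.integral_congr
      (g := fun t => t * (1 - 2 * t) / (t * b + (1 - t) * a) ^ 2) ?_]
    · exact integral_eq_sub_of_hasDerivAt (fun t ht => hder t (hsub1 ht))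
        ((hcont'.mono hsub1).intervalIntegrable)
    · intro t ht
      have ht' := hsub1 ht
      rw [uIcc_of_le (by norm_num : (0:ℝ) ≤ 1/2)] at ht
      have : (0:ℝ) ≤ 1 - 2 * t := by
        have := ht.2; linarith
      simp [abs_of_nonneg this]
  have e2 : (∫ t in ((1:ℝ)/2)..1, t * |1 - 2 * t| / (t * b + (1 - t) * a) ^ 2)
      = F (1/2) - F 1 := by
    rw [intervalIntegral.integral_congr
      (g := fun t => -(t * (1 - 2 * t) / (t * b + (1 - t) * a) ^ 2)) ?_]
    · have := integral_eq_sub_of_hasDerivAt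
        (f := fun t => -F t)
        (f' := fun t => -(t * (1 - 2 * t) / (t * b + (1 - t) * a) ^ 2))
        (fun t ht => (hder t (hsub2 ht)).neg)
        (((hcont'.mono hsub2).intervalIntegrable).neg)
      rw [this]
      ring
    · intro t ht
      rw [uIcc_of_le (by norm_num : (1:ℝ)/2 ≤ 1)] at ht
      have h0 : (0:ℝ) ≤ 2 * t - 1 := by
        have := ht.1; linarith
      simp only [abs_of_nonpos (show 1 - 2 * t ≤ 0 by linarith)]
      ring
  rw [hsplit, e1, e2]
  have hv0 : (0:ℝ) * b + (1 - 0) * a = a := by ring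
  have hv1 : (1:ℝ) * b + (1 - 1) * a = b := by ring
  have hvh : (1/2:ℝ) * b + (1 - 1/2) * a = (a + b) / 2 := by ring
  have hlog : Real.log ((a + b) ^ 2 / (4 * a * b))
      = 2 * Real.log ((a + b) / 2) - Real.log a - Real.log b := by
    rw [show (a + b) ^ 2 / (4 * a * b) = ((a + b) / 2) ^ 2 / (a * b) by ring,
      Real.log_div (by positivity) (by positivity),
      Real.log_pow, Real.log_mul ha.ne' hb.ne']
    push_cast
    ring
  simp only [hF, hv0, hv1, hvh, hlog]
  have hab2 : (0:ℝ) < a + b := by linarith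
  field_simp
  ring
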